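/- Let G be a finite p-group of nilpotence class 2. Then IA(G) ≅ Hom(G/G', G') and IA(G)* ≅ Hom(G/Z(G), G'), where IA(G)* denotes the IA-automorphisms fixing Z(G) pointwise. -/

import Mathlib

/-- The subgroup of `MulAut G` of automorphisms `α` with `x⁻¹ * α x ∈ X` for all `x`
(automorphisms centralizing `G/X`). -/
def autCentMod {G : Type*} [Group G] (X : Subgroup G) : Subgroup (MulAut G) where
  carrier := {α | ∀ x : G, x⁻¹ * α x ∈ X}
  one_mem' := by intro x; simpa using X.one_mem
  mul_mem' := by
    intro α β hα hβ x
    have h := X.mul_mem (hβ x) (hα (β x))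
    simpa [mul_assoc] using h
  inv_mem' := by
    intro α hα x
    have h := X.inv_mem (hα (α⁻¹ x))
    simpa [MulAut.apply_inv_self, mul_inv_rev] using h

/-- The subgroup of `MulAut G` of automorphisms fixing `Y` pointwise. -/
def autFix {G : Type*} [Group G] (Y : Subgroup G) : Subgroup (MulAut G) where
  carrier := {α | ∀ y ∈ Y, α y = y}
  one_mem' := by intro y _; rfl
  mul_mem' := by
    intro α β hα hβ y hy
    have : (α * β) y = α (β y) := rfl
    rw [this, hβ y hy, hα y hy]
  inv_mem' := by
    intro α hα y hy
    have := hα y hy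
    calc α⁻¹ y = α⁻¹ (α y) := by rw [this]
    _ = y := by simp

/-- A group is purely non-abelian if it has no nontrivial abelian (internal) direct factor. -/
def IsPurelyNonabelian (G : Type*) [Group G] : Prop :=
  ¬ ∃ H K : Subgroup G, H ≠ ⊥ ∧ H ≤ Subgroup.center G ∧ K.Normal ∧ IsCompl H K

/-- `X` has invariant-factor decomposition `p^(e 0) ≥ p^(e 1) ≥ …`. -/
def HasDecomp (p : ℕ) (X : Type*) [Group X] {m : ℕ} (e : Fin m → ℕ) : Prop :=
  Antitone e ∧ (∀ j, 0 < e j) ∧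
    Nonempty (X ≃* ((j : Fin m) → Multiplicative (ZMod (p ^ e j))))

/-- `n ≤ var(X, Y)`, where `var(X,Y) = p^(β r)` and `r` is the largest index at which the
invariant factor exponents `β` of `X` and `γ` of `Y` differ. -/
def varLe (p : ℕ) (X Y : Type*) [Group X] [Group Y] (n : ℕ) : Prop :=
  ∀ (m : ℕ) (β γ : Fin m → ℕ), HasDecomp p X β → HasDecomp p Y γ →
    ∀ r : Fin m, β r < γ r → (∀ j, r < j → β j = γ j) → n ≤ p ^ β r

/-- `n = var(X, Y)`. -/
def varEq (p : ℕ) (X Y : Type*) [Group X] [Group Y] (n : ℕ) : Prop :=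
  ∀ (m : ℕ) (β γ : Fin m → ℕ), HasDecomp p X β → HasDecomp p Y γ →
    ∀ r : Fin m, β r < γ r → (∀ j, r < j → β j = γ j) → n = p ^ β r

/-- A central subgroup is commutative. -/
@[reducible]
def centralCommGroup {G : Type*} [Group G] {X : Subgroup G}
    (hX : X ≤ Subgroup.center G) : CommGroup ↥X :=
  { (inferInstance : Group ↥X) with
    mul_comm := fun a b => Subtype.ext (Subgroup.mem_center_iff.mp (hX b.2) a.1) }


section Aux

variable {G : Type*} [Group G]

open scoped commutatorElement

theorem central_commutatorElement {z w : G} (hz : z ∈ Subgroup.center G)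
    (hw : w ∈ Subgroup.center G) (a b : G) : ⁅a * z, b * w⁆ = ⁅a, b⁆ := by
  have hz' := Subgroup.mem_center_iff.mp hz
  have hw' := Subgroup.mem_center_iff.mp hw
  simp only [commutatorElement_def]
  calc (a * z) * (b * w) * (a * z)⁻¹ * (b * w)⁻¹
      = a * ((z * (b * w)) * z⁻¹) * a⁻¹ * (b * w)⁻¹ := by group
    _ = a * (((b * w) * z) * z⁻¹) * a⁻¹ * (b * w)⁻¹ := by rw [hz' (b * w)]
    _ = a * b * ((w * a⁻¹) * w⁻¹) * b⁻¹ := by group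
    _ = a * b * ((a⁻¹ * w) * w⁻¹) * b⁻¹ := by rw [hw' a⁻¹]
    _ = a * b * a⁻¹ * b⁻¹ := by group

theorem autCentMod_le_autFix (hle : commutator G ≤ Subgroup.center G) :
    autCentMod (commutator G) ≤ autFix (commutator G) := by
  intro α hα y hy
  rw [commutator_eq_closure] at hy
  induction hy using Subgroup.closure_induction with
  | mem g hg =>
    obtain ⟨a, b, rfl⟩ := hg
    have e1 : α a = a * (a⁻¹ * α a) := by group
    have e2 : α b = b * (b⁻¹ * α b) := by group
    rw [map_commutatorElement, e1, e2,
      central_commutatorElement (hle (hα a)) (hle (hα b))]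
  | one => simp
  | mul x y _ _ hx hy => rw [map_mul, hx, hy]
  | inv x _ hx => rw [map_inv, hx]

theorem keyNonempty [Finite G] (hle : commutator G ≤ Subgroup.center G)
    (N : Subgroup G) [N.Normal] (hcN : commutator G ≤ N) :
    letI : CommGroup ↥(commutator G) := centralCommGroup hle
    Nonempty (↥(autCentMod (commutator G) ⊓ autFix N) ≃*
      ((G ⧸ N) →* ↥(commutator G))) := by
  letI : CommGroup ↥(commutator G) := centralCommGroup hle
  -- forward map
  have hker : ∀ (α : ↥(autCentMod (commutator G) ⊓ autFix N)) (n : G), n ∈ N →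
      (⟨n⁻¹ * (α : MulAut G) n, (α.2.1 : _) n⟩ : ↥(commutator G)) = 1 := by
    intro α n hn
    have := (α.2.2 : ∀ y ∈ N, (α : MulAut G) y = y) n hn
    exact Subtype.ext (by simp [this])
  let g : ↥(autCentMod (commutator G) ⊓ autFix N) → G →* ↥(commutator G) :=
    fun α =>
    { toFun := fun x => ⟨x⁻¹ * (α : MulAut G) x, (α.2.1 : _) x⟩
      map_one' := Subtype.ext (by simp)
      map_mul' := by
        intro x y
        have hc := Subgroup.mem_center_iff.mp (hle ((α.2.1 : _) x)) y⁻¹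
        refine Subtype.ext ?_
        show (x * y)⁻¹ * (α : MulAut G) (x * y) =
          (x⁻¹ * (α : MulAut G) x) * (y⁻¹ * (α : MulAut G) y)
        calc (x * y)⁻¹ * (α : MulAut G) (x * y)
            = (y⁻¹ * (x⁻¹ * (α : MulAut G) x)) * (α : MulAut G) y := by
              rw [map_mul]; group
          _ = ((x⁻¹ * (α : MulAut G) x) * y⁻¹) * (α : MulAut G) y := by rw [hc]
          _ = _ := by rw [mul_assoc] }
  let Φ : ↥(autCentMod (commutator G) ⊓ autFix N) → ((G ⧸ N) →* ↥(commutator G)) :=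
    fun α => QuotientGroup.lift N (g α) (hker α)
  -- backward map
  have hφmem : ∀ (f : (G ⧸ N) →* ↥(commutator G)) (x : G),
      x * (f (x : G ⧸ N) : G) = 1 → x = 1 := by
    intro f x hx
    have hxe : x = ((f (x : G ⧸ N) : G))⁻¹ := eq_inv_of_mul_eq_one_left hx
    have hxN : x ∈ N := hcN (by rw [hxe]; exact (commutator G).inv_mem (f _).2)
    have hq : (x : G ⧸ N) = 1 := (QuotientGroup.eq_one_iff x).mpr hxN
    rw [hq, map_one] at hxe
    simpa using hxe
  let φ : ((G ⧸ N) →* ↥(commutator G)) → G →* G := fun f =>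
    { toFun := fun x => x * (f (x : G ⧸ N) : G)
      map_one' := by simp
      map_mul' := by
        intro x y
        have hc := Subgroup.mem_center_iff.mp (hle (f (x : G ⧸ N)).2) y
        show (x * y) * ((f ((x * y : G) : G ⧸ N) : G)) = _
        have : ((x * y : G) : G ⧸ N) = (x : G ⧸ N) * (y : G ⧸ N) := rfl
        rw [this, map_mul]
        show (x * y) * ((f (x : G ⧸ N) : G) * (f (y : G ⧸ N) : G)) = _
        calc (x * y) * ((f (x : G ⧸ N) : G) * (f (y : G ⧸ N) : G))
            = x * (y * (f (x : G ⧸ N) : G)) * (f (y : G ⧸ N) : G) := by group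
          _ = x * ((f (x : G ⧸ N) : G) * y) * (f (y : G ⧸ N) : G) := by rw [hc]
          _ = _ := by group }
  have hbij : ∀ f, Function.Bijective (φ f) := by
    intro f
    rw [← Finite.injective_iff_bijective]
    exact (injective_iff_map_eq_one (φ f)).mpr (hφmem f)
  let Ψ : ((G ⧸ N) →* ↥(commutator G)) → ↥(autCentMod (commutator G) ⊓ autFix N) :=
    fun f => ⟨MulEquiv.ofBijective (φ f) (hbij f), by
      constructor
      · intro x
        show x⁻¹ * (x * (f (x : G ⧸ N) : G)) ∈ commutator G
        rw [inv_mul_cancel_left]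
        exact (f _).2
      · intro n hn
        show n * (f (n : G ⧸ N) : G) = n
        rw [(QuotientGroup.eq_one_iff n).mpr hn, map_one]
        simp⟩
  refine ⟨{ toFun := Φ, invFun := Ψ, left_inv := ?_, right_inv := ?_, map_mul' := ?_ }⟩
  · intro α
    refine Subtype.ext (MulEquiv.ext fun x => ?_)
    show x * ((Φ α) (x : G ⧸ N) : G) = (α : MulAut G) x
    show x * (x⁻¹ * (α : MulAut G) x) = _
    group
  · intro f
    refine MonoidHom.ext fun q => ?_
    induction q using QuotientGroup.induction_on with
    | H x =>
      refine Subtype.ext ?_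
      show x⁻¹ * (x * (f (x : G ⧸ N) : G)) = (f (x : G ⧸ N) : G)
      group
  · intro α β
    refine MonoidHom.ext fun q => ?_
    induction q using QuotientGroup.induction_on with
    | H x =>
      refine Subtype.ext ?_
      show x⁻¹ * ((α : MulAut G) ((β : MulAut G) x)) =
        ((Φ α * Φ β) ((x : G) : G ⧸ N) : G)
      have hβx : (((β : MulAut G) x : G) : G ⧸ N) = (x : G ⧸ N) := by
        rw [QuotientGroup.eq]
        exact hcN (by simpa using (commutator G).inv_mem (β.2.1 x))
      have key : ((Φ α) ((x : G) : G ⧸ N)) =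
          ((Φ α) (((β : MulAut G) x : G) : G ⧸ N)) := by rw [hβx]
      show x⁻¹ * ((α : MulAut G) ((β : MulAut G) x)) =
        ((Φ α) ((x : G) : G ⧸ N) : G) * ((Φ β) ((x : G) : G ⧸ N) : G)
      rw [key]
      show x⁻¹ * ((α : MulAut G) ((β : MulAut G) x)) =
        (((β : MulAut G) x)⁻¹ * (α : MulAut G) ((β : MulAut G) x)) *
          (x⁻¹ * (β : MulAut G) x)
      have hc := Subgroup.mem_center_iff.mp (hle (β.2.1 x))
        (((β : MulAut G) x)⁻¹ * (α : MulAut G) ((β : MulAut G) x))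
      rw [hc]
      group

end Aux
/-- For a finite `p`-group `G` of nilpotence class 2 (i.e. `⊥ ≠ G' ≤ Z(G)`),
`IA(G) ≃ Hom(G/G', G')` and `IA(G)* ≃ Hom(G/Z(G), G')`. -/
theorem IA_iso_hom {p : ℕ} (hp : p.Prime) {G : Type*} [Group G] [Fintype G]
    (hG : IsPGroup p G)
    (hle : commutator G ≤ Subgroup.center G) (hne : commutator G ≠ ⊥) :
    letI : CommGroup ↥(commutator G) := centralCommGroup hle
    Nonempty (↥(autCentMod (commutator G)) ≃*
        ((G ⧸ commutator G) →* ↥(commutator G))) ∧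
      Nonempty (↥(autCentMod (commutator G) ⊓ autFix (Subgroup.center G)) ≃*
        ((G ⧸ Subgroup.center G) →* ↥(commutator G))) := by
  letI : CommGroup ↥(commutator G) := centralCommGroup hle
  constructor
  · have heq : autCentMod (commutator G) =
        autCentMod (commutator G) ⊓ autFix (commutator G) :=
      le_antisymm (le_inf le_rfl (autCentMod_le_autFix hle)) inf_le_left
    obtain ⟨e⟩ := keyNonempty hle (commutator G) le_rfl
    exact ⟨(MulEquiv.subgroupCongr heq).trans e⟩
  · exact keyNonempty hle (Subgroup.center G) hle
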